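/- For every integers d ≥ 1 and m ≥ d and every real constant C > 0, there exist arbitrarily large integers n and a simplicial complex K on n vertices such that f_K(m) ≤ 1 + m + C(m,2) + … + C(m,d) + m − d and f_K(n) > C·n^d. (Consequently, no shatter-function condition of the form 'f_S(m) ≤ 1 + m + … + C(m,d) + m − d for some fixed m' implies the bound f_S(n) = O(n^d) that holds for the set system of halfspaces in R^d.) -/

import Mathlib

/-- The shatter function of a set system `S` on the finite ground set `X`:
`f_S(m) = max { |{e ∩ Y : e ∈ S}| : Y ⊆ X, |Y| = m }`. -/
def shatter {X : Type*} [DecidableEq X] [Fintype X]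
    (S : Finset (Finset X)) (m : ℕ) : ℕ :=
  (Finset.univ.powersetCard m).sup (fun Y => (S.image (· ∩ Y)).card)


open Finset

set_option maxHeartbeats 1000000

lemma card_powersetCard_filter_superset {α : Type*} [DecidableEq α] (E B : Finset α)
    (hB : B ⊆ E) {N : ℕ} (hN : B.card ≤ N) :
    ((E.powersetCard N).filter (fun H => B ⊆ H)).card
      = (E.card - B.card).choose (N - B.card) := by
  rw [← card_sdiff_of_subset hB, ← card_powersetCard (N - B.card) (E \ B)]
  apply Finset.card_bij (fun H _ => H \ B)
  · rintro H hH
    simp only [mem_filter, mem_powersetCard] at hH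
    obtain ⟨⟨hHE, hHc⟩, hBH⟩ := hH
    rw [mem_powersetCard]
    exact ⟨sdiff_subset_sdiff hHE (Subset.refl B), by rw [card_sdiff_of_subset hBH, hHc]⟩
  · rintro H₁ h₁ H₂ h₂ h
    simp only [mem_filter, mem_powersetCard] at h₁ h₂
    rw [← sdiff_union_of_subset h₁.2, ← sdiff_union_of_subset h₂.2, h]
  · rintro G hG
    rw [mem_powersetCard] at hG
    refine ⟨G ∪ B, ?_, ?_⟩
    · simp only [mem_filter, mem_powersetCard]
      have hGB : Disjoint G B := disjoint_of_subset_left hG.1 sdiff_disjoint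
      refine ⟨⟨union_subset (hG.1.trans sdiff_subset) hB, ?_⟩, subset_union_right⟩
      rw [card_union_of_disjoint hGB, hG.2]
      omega
    · have hGB : Disjoint G B := disjoint_of_subset_left hG.1 sdiff_disjoint
      rw [union_sdiff_right, sdiff_eq_self_of_disjoint hGB]

lemma choose_mul_prod (M N : ℕ) (h : N ≤ M) : ∀ t, t ≤ N →
    (M - t).choose (N - t) * ∏ i ∈ Finset.range t, (M - i)
      = M.choose N * ∏ i ∈ Finset.range t, (N - i) := by
  intro t
  induction t with
  | zero => simp
  | succ t ih =>
    intro ht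
    have ht' : t ≤ N := le_of_lt ht
    rw [prod_range_succ, prod_range_succ]
    have key : (M - t) * (M - (t+1)).choose (N - (t+1)) = (M - t).choose (N - t) * (N - t) := by
      have h1 : M - t = (M - (t+1)) + 1 := by omega
      have h2 : N - t = (N - (t+1)) + 1 := by omega
      rw [h1, h2]
      exact Nat.add_one_mul_choose_eq (M - (t+1)) (N - (t+1))
    calc (M - (t+1)).choose (N - (t+1)) * ((∏ i ∈ range t, (M - i)) * (M - t))
        = ((M - t) * (M - (t+1)).choose (N - (t+1))) * ∏ i ∈ range t, (M - i) := by ring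
      _ = ((M - t).choose (N - t) * (N - t)) * ∏ i ∈ range t, (M - i) := by rw [key]
      _ = ((M - t).choose (N - t) * ∏ i ∈ range t, (M - i)) * (N - t) := by ring
      _ = (M.choose N * ∏ i ∈ range t, (N - i)) * (N - t) := by rw [ih ht']
      _ = M.choose N * ((∏ i ∈ range t, (N - i)) * (N - t)) := by ring

lemma card_powerset_filter_card_le {α : Type*} [DecidableEq α] (Y : Finset α) (d : ℕ) :
    (Y.powerset.filter (fun σ => σ.card ≤ d)).card = ∑ i ∈ Finset.range (d+1), Y.card.choose i := by
  have : Y.powerset.filter (fun σ => σ.card ≤ d)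
      = (Finset.range (d+1)).biUnion (fun i => Y.powersetCard i) := by
    ext σ
    simp only [mem_filter, mem_powerset, mem_biUnion, mem_range, mem_powersetCard]
    constructor
    · rintro ⟨h1, h2⟩; exact ⟨σ.card, by omega, h1, rfl⟩
    · rintro ⟨i, hi, h1, h2⟩; exact ⟨h1, by omega⟩
  rw [this, card_biUnion]
  · exact Finset.sum_congr rfl fun i _ => card_powersetCard i Y
  · intro i _ j _ hij
    simp only [disjoint_left, mem_powersetCard]
    rintro σ ⟨_, h1⟩ ⟨_, h2⟩
    exact hij (h1 ▸ h2 ▸ rfl)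

/-- Key existence result: a `(d+1)`-uniform hypergraph on `Fin n` with many edges such that
no `t ∈ [2, T]` edges span at most `t + d - 1` vertices. -/
lemma exists_sparse_hypergraph (d m : ℕ) (hd : 1 ≤ d) (hmd : d ≤ m) (c₀ s₀ : ℕ) :
    ∃ s : ℕ, s₀ ≤ s ∧ ∃ Hg : Finset (Finset (Fin (s ^ (2 * (m - d + 1))))),
      (∀ e ∈ Hg, e.card = d + 1) ∧
      (∀ B ⊆ Hg, 2 ≤ B.card → B.card ≤ m - d + 1 → ¬((B.sup id).card + 1 ≤ B.card + d)) ∧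
      (c₀ + 1) * (s ^ (2 * (m - d + 1) * d)) ≤ Hg.card := by
  classical
  set T : ℕ := m - d + 1 with hT
  have hT1 : 1 ≤ T := by omega
  set c : ℕ := 2 ^ ((T + d) * (T + d)) with hc
  set Q : ℕ := 2 ^ (d + 2) * Nat.factorial (d + 1) with hQ
  set D : ℕ := T ^ 2 * c * Q ^ T with hD
  set s : ℕ := s₀ + D + Q + 2 * T + 2 * d + (T + d) + c₀ + 2 with hs
  have hs2 : 2 ≤ s := by omega
  refine ⟨s, by omega, ?_⟩
  set n : ℕ := s ^ (2 * T) with hn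
  set N : ℕ := s ^ (2 * T * d + 1) with hNdef
  have hsn : s ≤ n := Nat.le_self_pow (by omega) s
  have hsN : s ≤ N := Nat.le_self_pow (by omega) s
  set E : Finset (Finset (Fin n)) := (Finset.univ : Finset (Fin n)).powersetCard (d + 1) with hE
  set M : ℕ := E.card with hM
  have hMn : M = n.choose (d + 1) := by
    rw [hM, hE, card_powersetCard, card_univ, Fintype.card_fin]
  -- M is large
  have hQpos : 0 < Q := by positivity
  have hQ' : n ^ (d+1) ≤ Q * M := by
    have hdesc : (n - d) ^ (d+1) ≤ n.descFactorial (d+1) := by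
      have := n.pow_sub_le_descFactorial (d+1)
      have hnd : n + 1 - (d + 1) = n - d := by omega
      rwa [hnd] at this
    have heq : n.descFactorial (d+1) = Nat.factorial (d+1) * n.choose (d+1) :=
      Nat.descFactorial_eq_factorial_mul_choose n (d+1)
    have h2nd : n ≤ 2 * (n - d) := by
      have h1 : 2 * d ≤ s := by omega
      omega
    calc n ^ (d+1) ≤ (2 * (n - d)) ^ (d+1) := Nat.pow_le_pow_left h2nd _
      _ = 2 ^ (d+1) * (n - d) ^ (d+1) := by rw [mul_pow]
      _ ≤ 2 ^ (d+1) * (Nat.factorial (d+1) * M) := by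
          apply Nat.mul_le_mul_left
          rw [hMn, ← heq]; exact hdesc
      _ ≤ Q * M := by
          rw [hQ]
          have : (2:ℕ) ^ (d+1) ≤ 2 ^ (d+2) := Nat.pow_le_pow_right (by norm_num) (by omega)
          calc 2 ^ (d+1) * (Nat.factorial (d+1) * M)
              = (2 ^ (d+1) * Nat.factorial (d+1)) * M := by ring
            _ ≤ (2 ^ (d+2) * Nat.factorial (d+1)) * M := by
                exact Nat.mul_le_mul_right _ (Nat.mul_le_mul_right _ this)
  have hNM : N ≤ M := by
    have h1 : N * Q ≤ N * s := Nat.mul_le_mul_left _ (by omega)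
    have h2 : N * s = s ^ (2 * T * d + 2) := by rw [hNdef, ← pow_succ]
    have h3 : s ^ (2 * T * d + 2) ≤ s ^ (2 * T * d + 2 * T) :=
      Nat.pow_le_pow_right (by omega) (by omega)
    have h4 : n ^ (d + 1) = s ^ (2 * T * d + 2 * T) := by
      rw [hn, ← pow_mul]
      ring
    have h5 : N * Q ≤ M * Q := by
      calc N * Q ≤ N * s := h1
        _ = s ^ (2 * T * d + 2) := h2
        _ ≤ s ^ (2 * T * d + 2 * T) := h3
        _ = n ^ (d+1) := h4.symm
        _ ≤ Q * M := hQ'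
        _ = M * Q := by ring
    exact Nat.le_of_mul_le_mul_right h5 hQpos
  have hChpos : 0 < M.choose N := Nat.choose_pos hNM
  set AC : Finset (Finset (Finset (Fin n))) :=
    E.powerset.filter
      (fun B => 2 ≤ B.card ∧ B.card ≤ T ∧ (B.sup id).card + 1 ≤ B.card + d) with hAC
  set cfg : Finset (Finset (Fin n)) → Finset (Finset (Finset (Fin n))) :=
    fun H => AC.filter (fun B => B ⊆ H) with hcfg
  set PP : Finset (Finset (Finset (Fin n))) := E.powersetCard N with hPP
  have hPPne : PP.Nonempty := Finset.powersetCard_nonempty.2 (le_trans hNM (le_of_eq hM))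
  obtain ⟨H, hHmem, hHmin⟩ := Finset.exists_min_image PP (fun G => (cfg G).card) hPPne
  have hPPcard : PP.card = M.choose N := by rw [hPP, card_powersetCard, ← hM]
  have havg : (cfg H).card * M.choose N ≤ ∑ G ∈ PP, (cfg G).card := by
    have h := Finset.card_nsmul_le_sum PP (fun G => (cfg G).card) ((cfg H).card)
      (fun x hx => hHmin x hx)
    rw [smul_eq_mul] at h
    calc (cfg H).card * M.choose N = PP.card * (cfg H).card := by rw [hPPcard]; ring
      _ ≤ _ := h
  have hdc : ∑ G ∈ PP, (cfg G).card = ∑ B ∈ AC, (M - B.card).choose (N - B.card) := by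
    calc ∑ G ∈ PP, (cfg G).card
        = ∑ G ∈ PP, ∑ B ∈ AC, (if B ⊆ G then 1 else 0) :=
          Finset.sum_congr rfl fun G _ => Finset.card_filter _ _
      _ = ∑ B ∈ AC, ∑ G ∈ PP, (if B ⊆ G then 1 else 0) := Finset.sum_comm
      _ = ∑ B ∈ AC, (PP.filter (fun G => B ⊆ G)).card :=
          Finset.sum_congr rfl fun B _ => (Finset.card_filter _ _).symm
      _ = ∑ B ∈ AC, (M - B.card).choose (N - B.card) := by
          apply Finset.sum_congr rfl
          intro B hB
          rw [hAC, mem_filter, mem_powerset] at hB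
          have hBN : B.card ≤ N := le_trans (le_trans hB.2.2.1 (by omega)) hsN
          rw [hPP, card_powersetCard_filter_superset E B hB.1 hBN, ← hM]
  have hgroup : ∑ B ∈ AC, (M - B.card).choose (N - B.card)
      = ∑ t ∈ Finset.Icc 2 T, ∑ B ∈ AC.filter (fun B => B.card = t),
          (M - B.card).choose (N - B.card) := by
    refine (Finset.sum_fiberwise_of_maps_to ?_ _).symm
    intro B hB
    rw [hAC, mem_filter] at hB
    rw [mem_Icc]
    exact ⟨hB.2.1, hB.2.2.1⟩
  have hAt : ∀ t ∈ Finset.Icc 2 T, (AC.filter (fun B => B.card = t)).card ≤ n ^ (t + d - 1) * c := by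
    intro t ht
    rw [mem_Icc] at ht
    have htd_le : t + d - 1 ≤ n := by
      have : T + d ≤ s := by omega
      omega
    have hsub : AC.filter (fun B => B.card = t) ⊆
        ((Finset.univ : Finset (Fin n)).powersetCard (t + d - 1)).biUnion
          (fun U => U.powerset.powersetCard t) := by
      intro B hB
      rw [mem_filter, hAC, mem_filter, mem_powerset] at hB
      obtain ⟨⟨hBE, h2, h3, h4⟩, hct⟩ := hB
      have hsupcard : (B.sup id).card ≤ t + d - 1 := by omega
      obtain ⟨U, hUsub, _, hUcard⟩ := Finset.exists_subsuperset_card_eq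
        (Finset.subset_univ (B.sup id)) hsupcard
        (by rw [card_univ, Fintype.card_fin]; exact htd_le)
      refine mem_biUnion.2 ⟨U, ?_, ?_⟩
      · rw [mem_powersetCard]; exact ⟨Finset.subset_univ U, hUcard⟩
      · rw [mem_powersetCard]
        refine ⟨?_, hct⟩
        intro e heB
        rw [mem_powerset]
        exact le_trans (Finset.le_sup (f := id) heB) hUsub
    calc (AC.filter (fun B => B.card = t)).card
        ≤ (((Finset.univ : Finset (Fin n)).powersetCard (t + d - 1)).biUnion
            (fun U => U.powerset.powersetCard t)).card := Finset.card_le_card hsub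
      _ ≤ ∑ U ∈ (Finset.univ : Finset (Fin n)).powersetCard (t + d - 1),
            (U.powerset.powersetCard t).card := Finset.card_biUnion_le
      _ ≤ n ^ (t + d - 1) * c := by
          have hconst : ∀ U ∈ (Finset.univ : Finset (Fin n)).powersetCard (t + d - 1),
              (U.powerset.powersetCard t).card ≤ c := by
            intro U hU
            rw [mem_powersetCard] at hU
            rw [card_powersetCard, card_powerset, hU.2]
            calc (2 ^ (t + d - 1)).choose t ≤ (2 ^ (t + d - 1)) ^ t := Nat.choose_le_pow _ _
              _ = 2 ^ ((t + d - 1) * t) := by rw [← pow_mul]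
              _ ≤ 2 ^ ((T + d) * (T + d)) :=
                  Nat.pow_le_pow_right (by norm_num)
                    (Nat.mul_le_mul (by omega) (by omega))
              _ = c := hc.symm
          calc ∑ U ∈ (Finset.univ : Finset (Fin n)).powersetCard (t + d - 1),
                (U.powerset.powersetCard t).card
              ≤ ((Finset.univ : Finset (Fin n)).powersetCard (t + d - 1)).card * c := by
                have := Finset.sum_le_card_nsmul _ _ c hconst
                rwa [smul_eq_mul] at this
            _ ≤ n ^ (t + d - 1) * c := by
                apply Nat.mul_le_mul_right
                rw [card_powersetCard, card_univ, Fintype.card_fin]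
                exact Nat.choose_le_pow _ _
  have hQ1 : n ^ (d+1) ≤ 2 ^ (d+1) * Nat.factorial (d+1) * M := by
    have hdesc : (n - d) ^ (d+1) ≤ n.descFactorial (d+1) := by
      have := n.pow_sub_le_descFactorial (d+1)
      have hnd : n + 1 - (d + 1) = n - d := by omega
      rwa [hnd] at this
    have heq : n.descFactorial (d+1) = Nat.factorial (d+1) * n.choose (d+1) :=
      Nat.descFactorial_eq_factorial_mul_choose n (d+1)
    have h2nd : n ≤ 2 * (n - d) := by
      have h1 : 2 * d ≤ s := by omega
      omega
    calc n ^ (d+1) ≤ (2 * (n - d)) ^ (d+1) := Nat.pow_le_pow_left h2nd _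
      _ = 2 ^ (d+1) * (n - d) ^ (d+1) := by rw [mul_pow]
      _ ≤ 2 ^ (d+1) * (Nat.factorial (d+1) * M) := by
          apply Nat.mul_le_mul_left
          rw [hMn, ← heq]; exact hdesc
      _ = 2 ^ (d+1) * Nat.factorial (d+1) * M := by ring
  have hMT2 : M ≤ 2 * (M - T) := by
    have h2T : 2 * T ≤ M := le_trans (by omega) (le_trans hsN hNM)
    omega
  have hQMT : n ^ (d+1) ≤ Q * (M - T) := by
    calc n ^ (d+1) ≤ 2 ^ (d+1) * Nat.factorial (d+1) * M := hQ1
      _ ≤ 2 ^ (d+1) * Nat.factorial (d+1) * (2 * (M - T)) :=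
          Nat.mul_le_mul_left _ hMT2
      _ = Q * (M - T) := by rw [hQ, pow_succ]; ring
  have hpert : ∀ t ∈ Finset.Icc 2 T,
      T ^ 2 * s * ((AC.filter (fun B => B.card = t)).card * (M - t).choose (N - t))
        ≤ s ^ (2 * T * d) * M.choose N := by
    intro t ht
    have htm := ht
    rw [mem_Icc] at htm
    obtain ⟨ht2, htT⟩ := htm
    have htN : t ≤ N := le_trans (le_trans htT (by omega)) hsN
    have hprodM_pos : 0 < ∏ i ∈ range t, (M - i) := by
      apply Finset.prod_pos
      intro i hi
      rw [mem_range] at hi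
      have : t ≤ M := le_trans htN hNM
      omega
    have hkey := choose_mul_prod M N hNM t htN
    -- scalar inequality in powers of s
    have hscalar : T ^ 2 * s * (n ^ (t + d - 1) * c) * N ^ t
        ≤ s ^ (2 * T * d) * (M - T) ^ t := by
      have hQt_pos : 0 < Q ^ t := Nat.pow_pos hQpos
      apply Nat.le_of_mul_le_mul_right ?_ hQt_pos
      -- multiply by Q^t
      have hcentral : T ^ 2 * s * (n ^ (t + d - 1) * c) * N ^ t * Q ^ t
          ≤ s ^ (2 * T * d) * (n ^ (d+1)) ^ t := by
        have hQle : Q ^ t ≤ Q ^ T := Nat.pow_le_pow_right (by omega) htT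
        have step1 : T ^ 2 * s * (n ^ (t + d - 1) * c) * N ^ t * Q ^ t
            ≤ D * (s * n ^ (t + d - 1) * N ^ t) := by
          calc T ^ 2 * s * (n ^ (t + d - 1) * c) * N ^ t * Q ^ t
              ≤ T ^ 2 * s * (n ^ (t + d - 1) * c) * N ^ t * Q ^ T := Nat.mul_le_mul_left _ hQle
            _ = (T ^ 2 * c * Q ^ T) * (s * n ^ (t + d - 1) * N ^ t) := by ring
            _ = D * (s * n ^ (t + d - 1) * N ^ t) := by rw [hD]
        refine le_trans step1 ?_
        -- now pure powers of s
        have e1 : n ^ (t + d - 1) = s ^ (2 * T * (t + d - 1)) := by rw [hn, ← pow_mul]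
        have e2 : N ^ t = s ^ ((2 * T * d + 1) * t) := by rw [hNdef, ← pow_mul]
        have e3 : (n ^ (d+1)) ^ t = s ^ (2 * T * (d+1) * t) := by
          rw [hn, ← pow_mul, ← pow_mul]
          congr 1
          ring
        rw [e1, e2, e3]
        have e4 : s * s ^ (2 * T * (t + d - 1)) * s ^ ((2 * T * d + 1) * t)
            = s ^ (1 + 2 * T * (t + d - 1) + (2 * T * d + 1) * t) := by
          rw [pow_add, pow_add, pow_one]
        have e5 : s ^ (2 * T * d) * s ^ (2 * T * (d+1) * t)
            = s ^ (2 * T * d + 2 * T * (d+1) * t) := by rw [pow_add]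
        rw [e4, e5]
        -- exponent inequality
        obtain ⟨u, hu⟩ : ∃ u, t = u + 2 := ⟨t - 2, by omega⟩
        obtain ⟨v, hv⟩ : ∃ v, T = u + 2 + v := ⟨T - (u + 2), by omega⟩
        have hexp : (1 + 2 * T * (t + d - 1) + (2 * T * d + 1) * t) + 1
            ≤ 2 * T * d + 2 * T * (d+1) * t := by
          subst hu
          have htd : u + 2 + d - 1 = u + d + 1 := by omega
          rw [htd, hv]
          have hid : 2 * (u + 2 + v) * d + 2 * (u + 2 + v) * (d+1) * (u + 2)
              = ((1 + 2 * (u + 2 + v) * (u + d + 1)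
                  + (2 * (u + 2 + v) * d + 1) * (u + 2)) + 1) + (u + 2 * v) := by ring
          rw [hid]
          exact Nat.le_add_right _ _
        calc D * s ^ (1 + 2 * T * (t + d - 1) + (2 * T * d + 1) * t)
            ≤ s * s ^ (1 + 2 * T * (t + d - 1) + (2 * T * d + 1) * t) :=
              Nat.mul_le_mul_right _ (by omega)
          _ = s ^ ((1 + 2 * T * (t + d - 1) + (2 * T * d + 1) * t) + 1) := by
              rw [pow_succ]; ring
          _ ≤ s ^ (2 * T * d + 2 * T * (d+1) * t) :=
              Nat.pow_le_pow_right (by omega) hexp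
      calc T ^ 2 * s * (n ^ (t + d - 1) * c) * N ^ t * Q ^ t
          ≤ s ^ (2 * T * d) * (n ^ (d+1)) ^ t := hcentral
        _ ≤ s ^ (2 * T * d) * (Q * (M - T)) ^ t :=
            Nat.mul_le_mul_left _ (Nat.pow_le_pow_left hQMT t)
        _ = s ^ (2 * T * d) * (M - T) ^ t * Q ^ t := by rw [mul_pow]; ring
    -- combine with product bounds
    have hA := hAt t ht
    have hprodN : ∏ i ∈ range t, (N - i) ≤ N ^ t := by
      have := Finset.prod_le_pow_card (range t) (fun i => N - i) N (fun i _ => Nat.sub_le N i)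
      rwa [card_range] at this
    have hprodM : (M - T) ^ t ≤ ∏ i ∈ range t, (M - i) := by
      have := Finset.pow_card_le_prod (range t) (fun i => M - i) (M - T)
        (fun i hi => by rw [mem_range] at hi; show M - T ≤ M - i; omega)
      rwa [card_range] at this
    have hXN : T ^ 2 * s * (AC.filter (fun B => B.card = t)).card * ∏ i ∈ range t, (N - i)
        ≤ s ^ (2 * T * d) * ∏ i ∈ range t, (M - i) := by
      calc T ^ 2 * s * (AC.filter (fun B => B.card = t)).card * ∏ i ∈ range t, (N - i)
          ≤ T ^ 2 * s * (n ^ (t + d - 1) * c) * N ^ t := by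
            apply Nat.mul_le_mul (Nat.mul_le_mul_left _ hA) hprodN
        _ ≤ s ^ (2 * T * d) * (M - T) ^ t := hscalar
        _ ≤ s ^ (2 * T * d) * ∏ i ∈ range t, (M - i) := Nat.mul_le_mul_left _ hprodM
    have hfin : (T ^ 2 * s * ((AC.filter (fun B => B.card = t)).card * (M - t).choose (N - t)))
        * ∏ i ∈ range t, (M - i)
        ≤ (s ^ (2 * T * d) * M.choose N) * ∏ i ∈ range t, (M - i) := by
      calc (T ^ 2 * s * ((AC.filter (fun B => B.card = t)).card * (M - t).choose (N - t)))
            * ∏ i ∈ range t, (M - i)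
          = (T ^ 2 * s * (AC.filter (fun B => B.card = t)).card)
              * ((M - t).choose (N - t) * ∏ i ∈ range t, (M - i)) := by ring
        _ = (T ^ 2 * s * (AC.filter (fun B => B.card = t)).card)
              * (M.choose N * ∏ i ∈ range t, (N - i)) := by rw [hkey]
        _ = M.choose N * (T ^ 2 * s * (AC.filter (fun B => B.card = t)).card
              * ∏ i ∈ range t, (N - i)) := by ring
        _ ≤ M.choose N * (s ^ (2 * T * d) * ∏ i ∈ range t, (M - i)) :=
            Nat.mul_le_mul_left _ hXN
        _ = (s ^ (2 * T * d) * M.choose N) * ∏ i ∈ range t, (M - i) := by ring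
    exact Nat.le_of_mul_le_mul_right hfin hprodM_pos
  have hsum : T ^ 2 * s * ∑ B ∈ AC, (M - B.card).choose (N - B.card)
      ≤ T * (s ^ (2 * T * d) * M.choose N) := by
    rw [hgroup, Finset.mul_sum]
    have heach : ∀ t ∈ Finset.Icc 2 T,
        T ^ 2 * s * ∑ B ∈ AC.filter (fun B => B.card = t), (M - B.card).choose (N - B.card)
          ≤ s ^ (2 * T * d) * M.choose N := by
      intro t ht
      have hconst : ∑ B ∈ AC.filter (fun B => B.card = t), (M - B.card).choose (N - B.card)
          = (AC.filter (fun B => B.card = t)).card * (M - t).choose (N - t) := by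
        rw [Finset.sum_congr rfl (fun B hB => by rw [(mem_filter.1 hB).2]),
          Finset.sum_const, smul_eq_mul]
      rw [hconst]
      exact hpert t ht
    calc ∑ t ∈ Finset.Icc 2 T, T ^ 2 * s *
            ∑ B ∈ AC.filter (fun B => B.card = t), (M - B.card).choose (N - B.card)
        ≤ ∑ t ∈ Finset.Icc 2 T, s ^ (2 * T * d) * M.choose N := Finset.sum_le_sum heach
      _ = (Finset.Icc 2 T).card * (s ^ (2 * T * d) * M.choose N) := by
          rw [Finset.sum_const, smul_eq_mul]
      _ ≤ T * (s ^ (2 * T * d) * M.choose N) := by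
          apply Nat.mul_le_mul_right
          rw [Nat.card_Icc]
          omega
  have hcfgbound : T * s * (cfg H).card ≤ s ^ (2 * T * d) := by
    have h1 : (T ^ 2 * s * (cfg H).card) * M.choose N ≤ (T * s ^ (2 * T * d)) * M.choose N := by
      calc (T ^ 2 * s * (cfg H).card) * M.choose N
          = T ^ 2 * s * ((cfg H).card * M.choose N) := by ring
        _ ≤ T ^ 2 * s * ∑ G ∈ PP, (cfg G).card := Nat.mul_le_mul_left _ havg
        _ = T ^ 2 * s * ∑ B ∈ AC, (M - B.card).choose (N - B.card) := by rw [hdc]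
        _ ≤ T * (s ^ (2 * T * d) * M.choose N) := hsum
        _ = (T * s ^ (2 * T * d)) * M.choose N := by ring
    have h2 : T ^ 2 * s * (cfg H).card ≤ T * s ^ (2 * T * d) :=
      Nat.le_of_mul_le_mul_right h1 hChpos
    have h3 : T * (T * s * (cfg H).card) ≤ T * s ^ (2 * T * d) := by
      calc T * (T * s * (cfg H).card) = T ^ 2 * s * (cfg H).card := by ring
        _ ≤ T * s ^ (2 * T * d) := h2
    exact Nat.le_of_mul_le_mul_left h3 (by omega)
  -- the good hypergraph
  have hHE : H ⊆ E := (mem_powersetCard.1 (by rwa [hPP] at hHmem)).1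
  have hHcard : H.card = N := (mem_powersetCard.1 (by rwa [hPP] at hHmem)).2
  set Hg : Finset (Finset (Fin n)) := H \ (cfg H).biUnion id with hHgdef
  have hHgsub : Hg ⊆ H := sdiff_subset
  refine ⟨Hg, ?_, ?_, ?_⟩
  · -- uniformity
    intro e he
    have heE : e ∈ E := hHE (hHgsub he)
    rw [hE, mem_powersetCard] at heE
    exact heE.2
  · -- config-freeness
    intro B hB h2 h3 h4
    have hBH : B ⊆ H := hB.trans hHgsub
    have hBcfg : B ∈ cfg H := by
      rw [hcfg]
      rw [mem_filter, hAC, mem_filter, mem_powerset]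
      exact ⟨⟨hBH.trans hHE, h2, h3, h4⟩, hBH⟩
    obtain ⟨b, hb⟩ := Finset.card_pos.1 (by omega : 0 < B.card)
    have hbHg : b ∈ Hg := hB hb
    rw [hHgdef, mem_sdiff] at hbHg
    exact hbHg.2 (mem_biUnion.2 ⟨B, hBcfg, hb⟩)
  · -- size
    have hdel : ((cfg H).biUnion id).card ≤ (cfg H).card * T := by
      calc ((cfg H).biUnion id).card ≤ ∑ B ∈ cfg H, B.card := by
            have := Finset.card_biUnion_le (s := cfg H) (t := id)
            simpa using this
        _ ≤ (cfg H).card * T := by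
            have : ∀ B ∈ cfg H, B.card ≤ T := by
              intro B hB
              rw [hcfg, mem_filter, hAC, mem_filter] at hB
              exact hB.1.2.2.1
            have h := Finset.sum_le_card_nsmul (cfg H) (fun B => B.card) T this
            simpa [mul_comm] using h
    have hcover : H ⊆ Hg ∪ (cfg H).biUnion id := by
      intro x hx
      rw [mem_union, hHgdef, mem_sdiff]
      by_cases hxd : x ∈ (cfg H).biUnion id
      · exact Or.inr hxd
      · exact Or.inl ⟨hx, hxd⟩
    have hNle : N ≤ Hg.card + (cfg H).card * T := by
      calc N = H.card := hHcard.symm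
        _ ≤ (Hg ∪ (cfg H).biUnion id).card := Finset.card_le_card hcover
        _ ≤ Hg.card + ((cfg H).biUnion id).card := Finset.card_union_le _ _
        _ ≤ Hg.card + (cfg H).card * T := Nat.add_le_add_left hdel _
    -- multiply through by s
    have hXs : ((cfg H).card * T) * s ≤ s ^ (2 * T * d) := by
      calc ((cfg H).card * T) * s = T * s * (cfg H).card := by ring
        _ ≤ s ^ (2 * T * d) := hcfgbound
    have hNs : s ^ (2 * T * d + 2) ≤ Hg.card * s + s ^ (2 * T * d) := by
      calc s ^ (2 * T * d + 2) = N * s := by rw [hNdef, ← pow_succ]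
        _ ≤ (Hg.card + (cfg H).card * T) * s := Nat.mul_le_mul_right _ hNle
        _ = Hg.card * s + ((cfg H).card * T) * s := by ring
        _ ≤ Hg.card * s + s ^ (2 * T * d) := Nat.add_le_add_left hXs _
    have hss : ((c₀ + 1) * s ^ (2 * T * d)) * s + s ^ (2 * T * d) ≤ s ^ (2 * T * d + 2) := by
      have hinner : (c₀ + 1) * s + 1 ≤ s * s := by
        have hc₀s : c₀ + 2 ≤ s := by omega
        calc (c₀ + 1) * s + 1 ≤ (c₀ + 1) * s + s := by omega
          _ = (c₀ + 2) * s := by ring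
          _ ≤ s * s := Nat.mul_le_mul_right _ hc₀s
      calc ((c₀ + 1) * s ^ (2 * T * d)) * s + s ^ (2 * T * d)
          = s ^ (2 * T * d) * ((c₀ + 1) * s + 1) := by ring
        _ ≤ s ^ (2 * T * d) * (s * s) := Nat.mul_le_mul_left _ hinner
        _ = s ^ (2 * T * d + 2) := by rw [pow_add]; ring
    have hfinal : ((c₀ + 1) * s ^ (2 * T * d)) * s + s ^ (2 * T * d)
        ≤ Hg.card * s + s ^ (2 * T * d) := le_trans hss hNs
    have h9 : ((c₀ + 1) * s ^ (2 * T * d)) * s ≤ Hg.card * s := by omega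
    exact Nat.le_of_mul_le_mul_right h9 (by omega)
/-- **Remark.** For integers `d ≥ 1`, `m ≥ d` and any real `C > 0`, there exist
arbitrarily large `n` and a simplicial complex `K` on `n` vertices with
`f_K(m) ≤ 1 + m + C(m,2) + … + C(m,d) + m − d` and `f_K(n) > C·n^d`.
(Hence no shatter condition of this form implies the bound `O(n^d)` valid for
halfspaces in `ℝ^d`.) -/
theorem no_sharp_shatter_condition (d m : ℕ) (hd : 1 ≤ d) (hmd : d ≤ m)
    (C : ℝ) (hC : 0 < C) (n₀ : ℕ) :
    ∃ n : ℕ, n₀ ≤ n ∧ ∃ K : Finset (Finset (Fin n)),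
      (∀ σ ∈ K, ∀ τ ⊆ σ, τ ∈ K) ∧
      shatter K m ≤ (∑ i ∈ Finset.range (d + 1), m.choose i) + (m - d) ∧
      C * (n : ℝ) ^ d < (shatter K n : ℝ) := by
  classical
  obtain ⟨s, hs₀, Hg, hUnif, hFree, hBig⟩ :=
    exists_sparse_hypergraph d m hd hmd ⌈C⌉₊ (n₀ + 1)
  have hs1 : 1 ≤ s := by omega
  have hn₀ : n₀ ≤ s ^ (2 * (m - d + 1)) := by
    have : s ≤ s ^ (2 * (m - d + 1)) := Nat.le_self_pow (by omega) s
    omega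
  refine ⟨s ^ (2 * (m - d + 1)), hn₀, ?_⟩
  set K : Finset (Finset (Fin (s ^ (2 * (m - d + 1))))) :=
    ((Finset.univ : Finset (Fin (s ^ (2 * (m - d + 1))))).powerset.filter
      (fun σ => σ.card ≤ d)) ∪ Hg with hK
  refine ⟨K, ?_, ?_, ?_⟩
  · -- downward closed
    intro σ hσ τ hτ
    rw [hK, Finset.mem_union] at hσ ⊢
    rcases hσ with hσ | hσ
    · left
      rw [Finset.mem_filter, Finset.mem_powerset] at hσ ⊢
      exact ⟨Finset.subset_univ τ, le_trans (Finset.card_le_card hτ) hσ.2⟩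
    · by_cases hτσ : τ = σ
      · right; rwa [hτσ]
      · left
        rw [Finset.mem_filter, Finset.mem_powerset]
        refine ⟨Finset.subset_univ τ, ?_⟩
        have hcard := Finset.card_lt_card (Finset.ssubset_iff_subset_ne.2 ⟨hτ, hτσ⟩)
        have := hUnif σ hσ
        omega
  · -- shatter at m
    simp only [shatter]
    apply Finset.sup_le
    intro Y hY
    rw [Finset.mem_powersetCard] at hY
    obtain ⟨-, hYm⟩ := hY
    have himg : K.image (· ∩ Y) ⊆
        (Y.powerset.filter (fun σ => σ.card ≤ d)) ∪ (Hg.filter (· ⊆ Y)) := by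
      intro τ hτ
      rw [Finset.mem_image] at hτ
      obtain ⟨σ, hσK, rfl⟩ := hτ
      rw [Finset.mem_union]
      rw [hK, Finset.mem_union] at hσK
      rcases hσK with hσ | hσ
      · left
        rw [Finset.mem_filter, Finset.mem_powerset] at hσ ⊢
        exact ⟨Finset.inter_subset_right,
          le_trans (Finset.card_le_card Finset.inter_subset_left) hσ.2⟩
      · by_cases hσY : σ ⊆ Y
        · right
          rw [Finset.mem_filter, Finset.inter_eq_left.2 hσY]
          exact ⟨hσ, hσY⟩
        · left
          rw [Finset.mem_filter, Finset.mem_powerset]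
          refine ⟨Finset.inter_subset_right, ?_⟩
          have hne : σ ∩ Y ≠ σ := fun h => hσY (by rw [← h]; exact Finset.inter_subset_right)
          have hlt : (σ ∩ Y).card < σ.card :=
            Finset.card_lt_card (Finset.ssubset_iff_subset_ne.2 ⟨Finset.inter_subset_left, hne⟩)
          have := hUnif σ hσ
          omega
    have hsmall : (Y.powerset.filter (fun σ => σ.card ≤ d)).card
        = ∑ i ∈ Finset.range (d+1), m.choose i := by
      rw [card_powerset_filter_card_le, hYm]
    have hbig : (Hg.filter (· ⊆ Y)).card ≤ m - d := by
      by_contra hcon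
      push_neg at hcon
      obtain ⟨B, hBsub, hBcard⟩ := Finset.exists_subset_card_eq
        (show m - d + 1 ≤ (Hg.filter (· ⊆ Y)).card by omega)
      by_cases hmd1 : d + 1 ≤ m
      · have hBHg : B ⊆ Hg := hBsub.trans (Finset.filter_subset _ _)
        apply hFree B hBHg (by omega) (by omega)
        have hsupY : B.sup id ≤ Y :=
          Finset.sup_le fun e heB => (Finset.mem_filter.1 (hBsub heB)).2
        have h1 : (B.sup id).card ≤ m := le_trans (Finset.card_le_card hsupY) (le_of_eq hYm)
        omega
      · have hmd' : m = d := by omega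
        obtain ⟨e, heB⟩ := Finset.card_pos.1 (by omega : 0 < B.card)
        have heY : e ⊆ Y := (Finset.mem_filter.1 (hBsub heB)).2
        have h1 : e.card ≤ m := le_trans (Finset.card_le_card heY) (le_of_eq hYm)
        have h2 := hUnif e ((Finset.filter_subset _ _) (hBsub heB))
        omega
    calc (K.image (· ∩ Y)).card
        ≤ ((Y.powerset.filter (fun σ => σ.card ≤ d)) ∪ (Hg.filter (· ⊆ Y))).card :=
          Finset.card_le_card himg
      _ ≤ (Y.powerset.filter (fun σ => σ.card ≤ d)).card + (Hg.filter (· ⊆ Y)).card :=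
          Finset.card_union_le _ _
      _ ≤ (∑ i ∈ Finset.range (d+1), m.choose i) + (m - d) := by
          rw [hsmall]; exact Nat.add_le_add_left hbig _
  · -- shatter at n
    have huniv : (Finset.univ : Finset (Fin (s ^ (2 * (m - d + 1))))).card
        = s ^ (2 * (m - d + 1)) := by simp
    have hps := Finset.powersetCard_self
      (Finset.univ : Finset (Fin (s ^ (2 * (m - d + 1)))))
    rw [huniv] at hps
    have hshat : shatter K (s ^ (2 * (m - d + 1))) = K.card := by
      simp only [shatter]
      rw [hps, Finset.sup_singleton]
      congr 1
      simp [Finset.inter_univ]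
    rw [hshat]
    have hKge : (⌈C⌉₊ + 1) * s ^ (2 * (m - d + 1) * d) ≤ K.card := by
      calc (⌈C⌉₊ + 1) * s ^ (2 * (m - d + 1) * d) ≤ Hg.card := hBig
        _ ≤ K.card := Finset.card_le_card Finset.subset_union_right
    have hnd : ((s ^ (2 * (m - d + 1)) : ℕ) : ℝ) ^ d
        = ((s ^ (2 * (m - d + 1) * d) : ℕ) : ℝ) := by
      push_cast
      rw [← pow_mul]
    have hspos : (0:ℝ) < ((s ^ (2 * (m - d + 1) * d) : ℕ) : ℝ) := by
      have : 0 < s ^ (2 * (m - d + 1) * d) := Nat.pow_pos (by omega)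
      exact_mod_cast this
    calc C * ((s ^ (2 * (m - d + 1)) : ℕ) : ℝ) ^ d
        = C * ((s ^ (2*(m-d+1)*d) : ℕ) : ℝ) := by rw [hnd]
      _ < ((⌈C⌉₊ + 1 : ℕ) : ℝ) * ((s ^ (2*(m-d+1)*d) : ℕ) : ℝ) := by
          apply mul_lt_mul_of_pos_right ?_ hspos
          have := Nat.le_ceil C
          push_cast
          linarith
      _ ≤ (K.card : ℝ) := by exact_mod_cast hKge
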